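/- For every positive integer m, the lettericity of the perfect matching mK₂ is exactly m: ℓ(mK₂) = m. -/

import Mathlib

/-- A `k`-lettering of a graph `G`: a decoder `D ⊆ Fin k × Fin k`, a letter
assignment `L`, and an injective ordering `ord` such that for `ord u < ord v`,
`u` and `v` are adjacent iff `(L u, L v) ∈ D`. -/
def HasLettering {V : Type*} (G : SimpleGraph V) (k : ℕ) : Prop :=
  ∃ (D : Set (Fin k × Fin k)) (L : V → Fin k) (ord : V → ℕ),
    Function.Injective ord ∧
    ∀ u v : V, u ≠ v → ord u < ord v → (G.Adj u v ↔ (L u, L v) ∈ D)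

/-- The lettericity of a graph: the least `k` such that it has a `k`-lettering. -/
noncomputable def lettericity {V : Type*} (G : SimpleGraph V) : ℕ :=
  sInf {k | HasLettering G k}

/-- The matching `mK₂`: the disjoint union of `m` single edges. -/
def matchingGraph (m : ℕ) : SimpleGraph (Fin m × Fin 2) where
  Adj a b := a.1 = b.1 ∧ a.2 ≠ b.2
  symm := by constructor; rintro a b ⟨h1, h2⟩; exact ⟨h1.symm, h2.symm⟩
  loopless := by constructor; rintro a ⟨h1, h2⟩; exact h2 rfl

/-- For every positive integer `m`, the lettericity of the perfect matching
`mK₂` is exactly `m`. -/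
theorem lettericity_matching (m : ℕ) (hm : 0 < m) :
    lettericity (matchingGraph m) = m := by
  have hmem : HasLettering (matchingGraph m) m := by
    refine ⟨{p | p.1 = p.2}, fun v => v.1, fun v => 2 * v.1.val + v.2.val, ?_, ?_⟩
    · intro a b hab
      simp only at hab
      have h2a := a.2.isLt; have h2b := b.2.isLt
      have h1 : a.1.val = b.1.val := by omega
      have h2 : a.2.val = b.2.val := by omega
      exact Prod.ext (Fin.ext h1) (Fin.ext h2)
    · intro u v huv _
      constructor
      · rintro ⟨h, _⟩; exact h
      · intro h
        refine ⟨h, fun h2 => huv (Prod.ext h h2)⟩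
  apply le_antisymm
  · exact csInf_le (OrderBot.bddBelow _) hmem
  · apply le_csInf ⟨m, by exact hmem⟩
    rintro k ⟨D, L, ord, hinj, hdec⟩
    set u : Fin m → Fin m × Fin 2 := fun i =>
      if ord (i, 0) < ord (i, 1) then (i, 0) else (i, 1) with hu
    set w : Fin m → Fin m × Fin 2 := fun i =>
      if ord (i, 0) < ord (i, 1) then (i, 1) else (i, 0) with hw
    have hufst : ∀ i, (u i).1 = i := by
      intro i; simp only [hu]; split <;> rfl
    have hwfst : ∀ i, (w i).1 = i := by
      intro i; simp only [hw]; split <;> rfl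
    have hlt : ∀ i, ord (u i) < ord (w i) := by
      intro i
      simp only [hu, hw]
      split
      · assumption
      · rename_i h
        rcases lt_or_eq_of_le (not_lt.mp h) with h' | h'
        · exact h'
        · exact absurd (hinj h') (by simp [Prod.ext_iff])
    have hne : ∀ i, u i ≠ w i := by
      intro i h
      exact absurd (congrArg ord h) (Nat.ne_of_lt (hlt i))
    have hadj : ∀ i, (matchingGraph m).Adj (u i) (w i) := by
      intro i
      refine ⟨?_, ?_⟩
      · rw [hufst, hwfst]
      · intro h
        exact hne i (Prod.ext (by rw [hufst, hwfst]) h)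
    -- key: if i ≠ j and L (u i) = L (u j) with ord (u i) < ord (u j), contradiction
    have key : ∀ i j : Fin m, i ≠ j → ord (u i) < ord (u j) →
        L (u i) = L (u j) → False := by
      intro i j hij hord hL
      have h1 : u i ≠ w j := by
        intro h
        exact hij (by rw [← hufst i, h, hwfst])
      have h2 : ord (u i) < ord (w j) := hord.trans (hlt j)
      have hna : ¬ (matchingGraph m).Adj (u i) (w j) := by
        rintro ⟨h, -⟩
        rw [hufst, hwfst] at h
        exact hij h
      have hnin : (L (u i), L (w j)) ∉ D := by
        rw [← hdec _ _ h1 h2]; exact hna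
      have hin : (L (u j), L (w j)) ∈ D := by
        rw [← hdec _ _ (hne j) (hlt j)]; exact hadj j
      rw [hL] at hnin
      exact hnin hin
    have hinjL : Function.Injective (fun i => L (u i)) := by
      intro i j hL
      by_contra hij
      rcases lt_trichotomy (ord (u i)) (ord (u j)) with h | h | h
      · exact key i j hij h hL
      · exact hij (by
          have := hinj h
          rw [← hufst i, this, hufst])
      · exact key j i (Ne.symm hij) h hL.symm
    have hcard := Fintype.card_le_of_injective _ hinjL
    simpa using hcard
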